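/- Let m ≥ 1 and n ≥ 2 be integers and let τ be a signature of length m. Then G^τ_{m×n}(z) = Σ_σ A_{τ,σ} · G^σ_{m×(n−1)}(z), where the sum runs over all signatures σ of length m and A is the transfer matrix for width m. -/

import Mathlib

open scoped Classical
open Polynomial

/-- The three possible states of a vertex relative to a vertex subset. -/
inductive VState : Type
  | unc | cov | occ
  deriving DecidableEq

instance instFintypeVState : Fintype VState :=
  ⟨{VState.unc, VState.cov, VState.occ}, fun x => by cases x <;> simp⟩

/-- The m×n grid graph `P_m □ P_n`; the vertex `(i, j)` lies in column `i` and row `j`. -/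
def gridGraph (m n : ℕ) : SimpleGraph (Fin m × Fin n) :=
  (SimpleGraph.pathGraph m).boxProd (SimpleGraph.pathGraph n)

/-- The state of vertex `v` with respect to `S`: occupied, covered, or uncovered. -/
noncomputable def vertexState {V : Type*} (G : SimpleGraph V) (S : Finset V) (v : V) : VState :=
  if v ∈ S then VState.occ else if ∃ u ∈ S, G.Adj u v then VState.cov else VState.unc

/-- A signature of length `m`: a string over {unc, cov, occ} with no adjacent
(unc, occ) or (occ, unc) pair. -/
def IsSignature {m : ℕ} (σ : Fin m → VState) : Prop :=
  ∀ i : Fin m, ∀ h : (i : ℕ) + 1 < m,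
    ¬(σ i = VState.unc ∧ σ ⟨(i : ℕ) + 1, h⟩ = VState.occ) ∧
    ¬(σ i = VState.occ ∧ σ ⟨(i : ℕ) + 1, h⟩ = VState.unc)

/-- `S` is almost dominating: every vertex in the first `n-1` rows is occupied or covered. -/
def AlmostDominating (m n : ℕ) (S : Finset (Fin m × Fin n)) : Prop :=
  ∀ v : Fin m × Fin n, (v.2 : ℕ) < n - 1 → vertexState (gridGraph m n) S v ≠ VState.unc

/-- The signature of `S`: the states of the vertices of the last row. -/
noncomputable def rowSig (m n : ℕ) (S : Finset (Fin m × Fin n)) : Fin m → VState :=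
  fun i =>
    if h : 0 < n then
      vertexState (gridGraph m n) S (i, ⟨n - 1, Nat.sub_lt h Nat.one_pos⟩)
    else VState.cov

/-- `G^σ_{m×n}(z)`: the generating function of almost dominating sets with signature `σ`. -/
noncomputable def genFun (m n : ℕ) (σ : Fin m → VState) : Polynomial ℤ :=
  ∑ S ∈ Finset.univ.filter
      (fun S : Finset (Fin m × Fin n) => AlmostDominating m n S ∧ rowSig m n S = σ),
    (X : Polynomial ℤ) ^ S.card

/-- `τ` is compatible with `σ`: uncovered vertices of `σ` get occupied neighbors in `τ`,
neighbors of occupied vertices of `σ` are covered or occupied, and covered vertices of `τ`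
have an occupied neighbor (above, left, or right). -/
def Compatible {m : ℕ} (τ σ : Fin m → VState) : Prop :=
  ∀ i : Fin m,
    (σ i = VState.unc → τ i = VState.occ) ∧
    (σ i = VState.occ → τ i = VState.cov ∨ τ i = VState.occ) ∧
    (τ i = VState.cov → σ i = VState.occ ∨
      (∃ j : Fin m, (j : ℕ) + 1 = (i : ℕ) ∧ τ j = VState.occ) ∨
      (∃ j : Fin m, (i : ℕ) + 1 = (j : ℕ) ∧ τ j = VState.occ))

/-- The number of occupied symbols of a signature. -/
def occCount {m : ℕ} (σ : Fin m → VState) : ℕ :=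
  (Finset.univ.filter fun i => σ i = VState.occ).card

/-- The type of signatures of length `m`. -/
abbrev Signature (m : ℕ) := {σ : Fin m → VState // IsSignature σ}

/-- The transfer matrix for width `m`, over ℤ[z], indexed by signatures of length `m`. -/
noncomputable def transferMatrix (m : ℕ) :
    Matrix (Signature m) (Signature m) (Polynomial ℤ) :=
  fun τ σ =>
    if Compatible τ.1 σ.1 then (X : Polynomial ℤ) ^ occCount τ.1 else 0

lemma vs_occ {V : Type*} (G : SimpleGraph V) (S : Finset V) (v : V) :
    vertexState G S v = VState.occ ↔ v ∈ S := by
  unfold vertexState; split_ifs <;> simp_all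
lemma vs_ne_unc {V : Type*} (G : SimpleGraph V) (S : Finset V) (v : V) :
    vertexState G S v ≠ VState.unc ↔ (v ∈ S ∨ ∃ u ∈ S, G.Adj u v) := by
  unfold vertexState; split_ifs <;> simp_all
lemma grid_adj {m n : ℕ} {a c : Fin m} {b d : Fin n} :
    (gridGraph m n).Adj (a, b) (c, d) ↔
      (((a:ℕ)+1 = c ∨ (c:ℕ)+1 = a) ∧ b = d) ∨ (((b:ℕ)+1 = d ∨ (d:ℕ)+1 = b) ∧ a = c) := by
  simp [gridGraph, SimpleGraph.boxProd_adj, SimpleGraph.pathGraph_adj]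

-- NEW
lemma rowSig_pos {m n : ℕ} (hn : 0 < n) (S : Finset (Fin m × Fin n)) (i : Fin m) :
    rowSig m n S i = vertexState (gridGraph m n) S (i, ⟨n - 1, Nat.sub_lt hn Nat.one_pos⟩) := by
  simp [rowSig, hn]
lemma isSignature_rowSig (m n : ℕ) (S : Finset (Fin m × Fin n)) :
    IsSignature (rowSig m n S) := by
  by_cases hn : 0 < n
  · intro i h
    set r : Fin n := ⟨n - 1, Nat.sub_lt hn Nat.one_pos⟩
    have key : ∀ a b : Fin m, ((a:ℕ) + 1 = (b:ℕ) ∨ (b:ℕ) + 1 = (a:ℕ)) →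
        rowSig m n S b = VState.occ → rowSig m n S a ≠ VState.unc := by
      intro a b hab hb
      rw [rowSig_pos hn] at hb ⊢
      rw [vs_occ] at hb
      rw [vs_ne_unc]
      exact Or.inr ⟨(b, r), hb, by rw [grid_adj]; exact Or.inl ⟨hab.symm, rfl⟩⟩
    constructor
    · rintro ⟨h1, h2⟩
      exact key i ⟨(i:ℕ)+1, h⟩ (Or.inl rfl) h2 h1
    · rintro ⟨h1, h2⟩
      exact key ⟨(i:ℕ)+1, h⟩ i (Or.inr rfl) h1 h2
  · intro i h
    simp [rowSig, hn]
noncomputable def restrictS (m n' : ℕ) (S : Finset (Fin m × Fin (n'+1))) :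
    Finset (Fin m × Fin n') :=
  Finset.univ.filter fun p => (p.1, p.2.castSucc) ∈ S
noncomputable def liftS (m n' : ℕ) (τ : Fin m → VState) (S' : Finset (Fin m × Fin n')) :
    Finset (Fin m × Fin (n'+1)) :=
  S'.image (fun p => (p.1, p.2.castSucc)) ∪
    (Finset.univ.filter fun i => τ i = VState.occ).image (fun i => (i, Fin.last n'))
lemma mem_restrictS {m n' : ℕ} {S : Finset (Fin m × Fin (n'+1))} {p : Fin m × Fin n'} :
    p ∈ restrictS m n' S ↔ (p.1, p.2.castSucc) ∈ S := by
  simp [restrictS]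
lemma mem_liftS_cast {m n' : ℕ} {τ : Fin m → VState} {S' : Finset (Fin m × Fin n')}
    {i : Fin m} {j : Fin n'} :
    (i, j.castSucc) ∈ liftS m n' τ S' ↔ (i, j) ∈ S' := by
  simp only [liftS, Finset.mem_union, Finset.mem_image, Finset.mem_filter, Finset.mem_univ,
    true_and, Prod.mk.injEq]
  constructor
  · rintro (⟨⟨a, b⟩, hab, rfl, hb⟩ | ⟨a, _, _, hl⟩)
    · obtain rfl : b = j := Fin.castSucc_inj.mp hb
      exact hab
    · exact absurd hl.symm (Fin.castSucc_lt_last j).ne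
  · intro h; exact Or.inl ⟨(i, j), h, rfl, rfl⟩
lemma mem_liftS_last {m n' : ℕ} {τ : Fin m → VState} {S' : Finset (Fin m × Fin n')}
    {i : Fin m} :
    (i, Fin.last n') ∈ liftS m n' τ S' ↔ τ i = VState.occ := by
  simp only [liftS, Finset.mem_union, Finset.mem_image, Finset.mem_filter, Finset.mem_univ,
    true_and, Prod.mk.injEq]
  constructor
  · rintro (⟨⟨a, b⟩, hab, rfl, hb⟩ | ⟨a, ha, rfl, -⟩)
    · exact absurd hb (Fin.castSucc_lt_last b).ne
    · exact ha
  · intro h; exact Or.inr ⟨i, h, rfl, trivial⟩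
lemma restrict_liftS {m n' : ℕ} (τ : Fin m → VState) (S' : Finset (Fin m × Fin n')) :
    restrictS m n' (liftS m n' τ S') = S' := by
  ext ⟨i, j⟩
  rw [mem_restrictS, mem_liftS_cast]
lemma lift_restrictS {m n' : ℕ} {τ : Fin m → VState} {S : Finset (Fin m × Fin (n'+1))}
    (hlast : ∀ i : Fin m, (i, Fin.last n') ∈ S ↔ τ i = VState.occ) :
    liftS m n' τ (restrictS m n' S) = S := by
  ext ⟨i, j⟩
  induction j using Fin.lastCases with
  | last => rw [mem_liftS_last, hlast]
  | cast j => rw [mem_liftS_cast, mem_restrictS]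
lemma card_liftS {m n' : ℕ} (τ : Fin m → VState) (S' : Finset (Fin m × Fin n')) :
    (liftS m n' τ S').card = (Finset.univ.filter fun i => τ i = VState.occ).card + S'.card := by
  rw [liftS, Finset.card_union_of_disjoint, Finset.card_image_of_injective,
    Finset.card_image_of_injective, add_comm]
  · intro a b hab
    simpa [Prod.ext_iff] using hab
  · intro p q hpq
    simp only [Prod.mk.injEq] at hpq
    exact Prod.ext hpq.1 (Fin.castSucc_inj.mp hpq.2)
  · rw [Finset.disjoint_left]
    rintro ⟨a, b⟩ h1 h2
    simp only [Finset.mem_image, Prod.mk.injEq] at h1 h2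
    obtain ⟨⟨x, y⟩, -, -, hy⟩ := h1
    obtain ⟨z, -, -, hz⟩ := h2
    rw [← hz] at hy
    exact absurd hy (Fin.castSucc_lt_last y).ne
lemma adj_cast {m n' : ℕ} {a i : Fin m} {b j : Fin n'} :
    (gridGraph m (n'+1)).Adj (a, b.castSucc) (i, j.castSucc) ↔
      (gridGraph m n').Adj (a, b) (i, j) := by
  rw [grid_adj, grid_adj]
  simp [Fin.castSucc_inj]
lemma adj_last_cast {m n' : ℕ} {i : Fin m} {j : Fin n'} (hj : (j:ℕ) + 1 = n') :
    (gridGraph m (n'+1)).Adj (i, Fin.last n') (i, j.castSucc) := by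
  rw [grid_adj]
  right
  constructor
  · right
    simp [hj]
  · rfl
lemma cover_cast {m n' : ℕ} (S : Finset (Fin m × Fin (n'+1))) (i : Fin m) (j : Fin n') :
    (∃ u ∈ S, (gridGraph m (n'+1)).Adj u (i, j.castSucc)) ↔
      ((∃ u ∈ restrictS m n' S, (gridGraph m n').Adj u (i, j)) ∨
        ((j:ℕ) + 1 = n' ∧ (i, Fin.last n') ∈ S)) := by
  constructor
  · rintro ⟨⟨a, b⟩, hb, hadj⟩
    rcases Fin.eq_castSucc_or_eq_last b with ⟨b', rfl⟩ | rfl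
    · exact Or.inl ⟨(a, b'), mem_restrictS.mpr hb, adj_cast.mp hadj⟩
    · right
      rw [grid_adj] at hadj
      rcases hadj with ⟨-, heq⟩ | ⟨hv, rfl⟩
      · exact absurd heq.symm (Fin.castSucc_lt_last j).ne
      · refine ⟨?_, hb⟩
        simp only [Fin.val_last, Fin.coe_castSucc] at hv
        have := j.2
        omega
  · rintro (⟨⟨a, b⟩, hb, hadj⟩ | ⟨hj, hlast⟩)
    · exact ⟨(a, b.castSucc), mem_restrictS.mp hb, adj_cast.mpr hadj⟩
    · exact ⟨(i, Fin.last n'), hlast, adj_last_cast hj⟩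
lemma cover_last {m n' : ℕ} (S : Finset (Fin m × Fin (n'+1))) (i : Fin m) :
    (∃ u ∈ S, (gridGraph m (n'+1)).Adj u (i, Fin.last n')) ↔
      ((∃ a : Fin m, ((a:ℕ)+1 = (i:ℕ) ∨ (i:ℕ)+1 = (a:ℕ)) ∧ (a, Fin.last n') ∈ S) ∨
        (∃ j : Fin n', (j:ℕ) + 1 = n' ∧ (i, j.castSucc) ∈ S)) := by
  constructor
  · rintro ⟨⟨a, b⟩, hb, hadj⟩
    rw [grid_adj] at hadj
    rcases hadj with ⟨hh, rfl⟩ | ⟨hv, rfl⟩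
    · exact Or.inl ⟨a, hh, hb⟩
    · right
      rcases Fin.eq_castSucc_or_eq_last b with ⟨b', rfl⟩ | rfl
      · refine ⟨b', ?_, hb⟩
        simp only [Fin.val_last, Fin.coe_castSucc] at hv
        have := b'.2
        omega
      · simp at hv
  · rintro (⟨a, hh, ha⟩ | ⟨j, hj, hjmem⟩)
    · refine ⟨(a, Fin.last n'), ha, ?_⟩
      rw [grid_adj]
      exact Or.inl ⟨hh, rfl⟩
    · exact ⟨(i, j.castSucc), hjmem, ((gridGraph m (n'+1)).adj_symm (adj_last_cast hj))⟩
lemma vs_cov {V : Type*} (G : SimpleGraph V) (S : Finset V) (v : V) :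
    vertexState G S v = VState.cov ↔ v ∉ S ∧ ∃ u ∈ S, G.Adj u v := by
  unfold vertexState; split_ifs <;> simp_all
lemma vs_unc {V : Type*} (G : SimpleGraph V) (S : Finset V) (v : V) :
    vertexState G S v = VState.unc ↔ v ∉ S ∧ ¬∃ u ∈ S, G.Adj u v := by
  unfold vertexState; split_ifs <;> simp_all
lemma rowSig_big {m n' : ℕ} (S : Finset (Fin m × Fin (n'+1))) (i : Fin m) :
    rowSig m (n'+1) S i = vertexState (gridGraph m (n'+1)) S (i, Fin.last n') := by
  rw [rowSig_pos (Nat.succ_pos n')]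
  rfl
lemma sig_pair {m : ℕ} {τ : Fin m → VState} (hτ : IsSignature τ) {a b : Fin m}
    (hab : (a:ℕ) + 1 = (b:ℕ)) :
    ¬(τ a = VState.unc ∧ τ b = VState.occ) ∧ ¬(τ a = VState.occ ∧ τ b = VState.unc) := by
  have h : (a:ℕ) + 1 < m := hab ▸ b.2
  have hb : (⟨(a:ℕ) + 1, h⟩ : Fin m) = b := Fin.ext hab
  have := hτ a h
  rwa [hb] at this
section Core
variable {m n' : ℕ}
lemma forward (hn' : 1 ≤ n') (τ : Fin m → VState) (S : Finset (Fin m × Fin (n'+1)))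
    (hAD : AlmostDominating m (n'+1) S) (hsig : rowSig m (n'+1) S = τ) :
    AlmostDominating m n' (restrictS m n' S) ∧
      Compatible τ (rowSig m n' (restrictS m n' S)) := by
  have hn0 : 0 < n' := hn'
  set S' := restrictS m n' S with hS'
  set r : Fin n' := ⟨n' - 1, Nat.sub_lt hn0 Nat.one_pos⟩ with hr
  have hr1 : (r:ℕ) + 1 = n' := by simp [hr]; omega
  have hlastmem : ∀ a : Fin m, (a, Fin.last n') ∈ S ↔ τ a = VState.occ := by
    intro a
    rw [← hsig, rowSig_big, vs_occ]
  constructor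
  · -- almost dominating small
    rintro ⟨i, j⟩ hj
    simp only at hj
    have hbig := hAD (i, j.castSucc) (by simpa using (by omega : (j:ℕ) < n'+1-1))
    rw [vs_ne_unc] at hbig ⊢
    rcases hbig with hmem | hcov
    · exact Or.inl (mem_restrictS.mpr hmem)
    · rcases (cover_cast S i j).mp hcov with h | ⟨hjn, -⟩
      · exact Or.inr h
      · omega
  · -- compatibility
    intro i
    have hσ : rowSig m n' S' i = vertexState (gridGraph m n') S' (i, r) := rowSig_pos hn0 S' i
    refine ⟨?_, ?_, ?_⟩
    · intro h
      rw [hσ, vs_unc] at h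
      obtain ⟨hnm, hnc⟩ := h
      have hbig := hAD (i, r.castSucc) (by simpa using (by omega : (r:ℕ) < n'+1-1))
      rw [vs_ne_unc] at hbig
      rcases hbig with hmem | hcov
      · exact absurd (mem_restrictS.mpr hmem) hnm
      · rcases (cover_cast S i r).mp hcov with h | ⟨-, hlast⟩
        · exact absurd h hnc
        · exact (hlastmem i).mp hlast
    · intro h
      rw [hσ, vs_occ, mem_restrictS] at h
      have hne : τ i ≠ VState.unc := by
        rw [← hsig, rowSig_big, vs_ne_unc]
        exact Or.inr ⟨(i, r.castSucc), h, (adj_last_cast hr1).symm⟩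
      cases hτi : τ i with
      | unc => exact absurd hτi hne
      | cov => exact Or.inl rfl
      | occ => exact Or.inr rfl
    · intro h
      rw [← hsig, rowSig_big, vs_cov] at h
      obtain ⟨-, hcov⟩ := h
      rcases (cover_last S i).mp hcov with ⟨a, hh, ha⟩ | ⟨j, hj, hjm⟩
      · have hτa : τ a = VState.occ := (hlastmem a).mp ha
        rcases hh with h1 | h1
        · exact Or.inr (Or.inl ⟨a, h1, hτa⟩)
        · exact Or.inr (Or.inr ⟨a, h1, hτa⟩)
      · left
        have hjr : j = r := Fin.ext (by simp [hr]; omega)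
        rw [hσ, vs_occ, mem_restrictS]
        rw [← hjr]
        exact hjm
lemma backward (hn' : 1 ≤ n') (τ : Fin m → VState) (hτ : IsSignature τ)
    (S' : Finset (Fin m × Fin n')) (hAD : AlmostDominating m n' S')
    (hcomp : Compatible τ (rowSig m n' S')) :
    AlmostDominating m (n'+1) (liftS m n' τ S') ∧ rowSig m (n'+1) (liftS m n' τ S') = τ := by
  have hn0 : 0 < n' := hn'
  set S : Finset (Fin m × Fin (n'+1)) := liftS m n' τ S' with hS
  set r : Fin n' := ⟨n' - 1, Nat.sub_lt hn0 Nat.one_pos⟩ with hr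
  have hr1 : (r:ℕ) + 1 = n' := by simp [hr]; omega
  have hrS : restrictS m n' S = S' := restrict_liftS τ S'
  have hσ : ∀ i, rowSig m n' S' i = vertexState (gridGraph m n') S' (i, r) :=
    fun i => rowSig_pos hn0 S' i
  have hsig : rowSig m (n'+1) S = τ := by
    funext i
    rw [rowSig_big]
    cases hτi : τ i with
    | occ => exact (vs_occ _ _ _).mpr (mem_liftS_last.mpr hτi)
    | cov =>
      rw [vs_cov]
      refine ⟨fun hmem => by simp [mem_liftS_last.mp hmem] at hτi, ?_⟩
      rcases (hcomp i).2.2 hτi with hσocc | ⟨j, hj1, hj2⟩ | ⟨j, hj1, hj2⟩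
      · rw [hσ, vs_occ] at hσocc
        exact ⟨(i, r.castSucc), mem_liftS_cast.mpr hσocc,
          (gridGraph m (n'+1)).adj_symm (adj_last_cast hr1)⟩
      · refine ⟨(j, Fin.last n'), mem_liftS_last.mpr hj2, ?_⟩
        rw [grid_adj]; exact Or.inl ⟨Or.inl hj1, rfl⟩
      · refine ⟨(j, Fin.last n'), mem_liftS_last.mpr hj2, ?_⟩
        rw [grid_adj]; exact Or.inl ⟨Or.inr hj1, rfl⟩
    | unc =>
      rw [vs_unc]
      refine ⟨fun hmem => by simp [mem_liftS_last.mp hmem] at hτi, ?_⟩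
      intro hcov
      rcases (cover_last S i).mp hcov with ⟨a, hh, ha⟩ | ⟨j, hj, hjm⟩
      · have hτa : τ a = VState.occ := mem_liftS_last.mp ha
        rcases hh with h1 | h1
        · exact (sig_pair hτ h1).2 ⟨hτa, hτi⟩
        · exact (sig_pair hτ h1).1 ⟨hτi, hτa⟩
      · have hjr : j = r := Fin.ext (by simp [hr]; omega)
        have : rowSig m n' S' i = VState.occ := by
          rw [hσ, vs_occ, ← hjr]
          exact mem_liftS_cast.mp hjm
        rcases (hcomp i).2.1 this with h | h <;> simp [h] at hτi
  refine ⟨?_, hsig⟩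
  rintro ⟨i, j⟩ hj
  simp only at hj
  rcases Fin.eq_castSucc_or_eq_last j with ⟨j', rfl⟩ | rfl
  · rw [vs_ne_unc]
    by_cases hj' : (j':ℕ) < n' - 1
    · have hsmall := hAD (i, j') hj'
      rw [vs_ne_unc] at hsmall
      rcases hsmall with hmem | hcov
      · exact Or.inl (mem_liftS_cast.mpr hmem)
      · refine Or.inr ((cover_cast S i j').mpr (Or.inl ?_))
        rwa [hrS]
    · have hjr : j' = r := Fin.ext (by simp [hr]; omega)
      cases hst : vertexState (gridGraph m n') S' (i, j') with
      | occ =>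
        rw [vs_occ] at hst
        exact Or.inl (mem_liftS_cast.mpr hst)
      | cov =>
        rw [vs_cov] at hst
        refine Or.inr ((cover_cast S i j').mpr (Or.inl ?_))
        rw [hrS]
        exact hst.2
      | unc =>
        have hτi : τ i = VState.occ := (hcomp i).1 (by rw [hσ, ← hjr]; exact hst)
        exact Or.inr ((cover_cast S i j').mpr
          (Or.inr ⟨by rw [hjr]; exact hr1, mem_liftS_last.mpr hτi⟩))
  · simp [Fin.val_last] at hj
end Core
lemma card_liftS' {m n' : ℕ} (τ : Fin m → VState) (S' : Finset (Fin m × Fin n')) :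
    (liftS m n' τ S').card = occCount τ + S'.card := by
  rw [card_liftS, occCount]

/-- For `m ≥ 1`, `n ≥ 2`, and any signature `τ` of length `m`:
`G^τ_{m×n}(z) = Σ_σ A_{τ,σ} · G^σ_{m×(n−1)}(z)`, the sum running over all signatures `σ`. -/
theorem genFun_eq_transferMatrix_mul (m n : ℕ) (hm : 1 ≤ m) (hn : 2 ≤ n) (τ : Signature m) :
    genFun m n τ.1 = ∑ σ : Signature m, transferMatrix m τ σ * genFun m (n - 1) σ.1 := by
  obtain ⟨n', rfl⟩ : ∃ k, n = k + 1 := ⟨n - 1, by omega⟩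
  have hn' : 1 ≤ n' := by omega
  have hsub : n' + 1 - 1 = n' := rfl
  rw [hsub]
  have step1 : ∀ σ : Signature m, transferMatrix m τ σ * genFun m n' σ.1 =
      ∑ S' ∈ Finset.univ.filter (fun S' : Finset (Fin m × Fin n') =>
          AlmostDominating m n' S' ∧ rowSig m n' S' = σ.1),
        if Compatible τ.1 (rowSig m n' S') then
          (X : Polynomial ℤ) ^ (occCount τ.1 + S'.card) else 0 := by
    intro σ
    rw [genFun, Finset.mul_sum]
    refine Finset.sum_congr rfl fun S' hS' => ?_
    simp only [Finset.mem_filter, Finset.mem_univ, true_and] at hS'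
    rw [hS'.2]
    simp only [transferMatrix]
    split_ifs with h
    · rw [pow_add]
    · rw [zero_mul]
  have hRHS : (∑ σ : Signature m, transferMatrix m τ σ * genFun m n' σ.1)
      = ∑ S ∈ Finset.univ.filter (fun S' : Finset (Fin m × Fin n') =>
          AlmostDominating m n' S' ∧ Compatible τ.1 (rowSig m n' S')),
        (X : Polynomial ℤ) ^ (occCount τ.1 + S.card) := by
    rw [Finset.sum_congr rfl fun σ _ => step1 σ]
    have hfilter : ∀ σ : Signature m,
        (Finset.univ.filter fun S' : Finset (Fin m × Fin n') =>
          AlmostDominating m n' S' ∧ rowSig m n' S' = σ.1)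
        = (Finset.univ.filter fun S' : Finset (Fin m × Fin n') =>
            AlmostDominating m n' S').filter
            (fun S' => (⟨rowSig m n' S', isSignature_rowSig m n' S'⟩ : Signature m) = σ) := by
      intro σ
      rw [Finset.filter_filter]
      apply Finset.filter_congr
      intro S' _
      simp [Subtype.ext_iff]
    rw [Finset.sum_congr rfl fun σ _ => by rw [hfilter σ]]
    rw [Finset.sum_fiberwise]
    rw [← Finset.sum_filter, Finset.filter_filter]
  rw [hRHS, genFun]
  refine Finset.sum_nbij' (restrictS m n') (liftS m n' τ.1) ?_ ?_ ?_ ?_ ?_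
  · intro S hS
    simp only [Finset.mem_filter, Finset.mem_univ, true_and] at hS ⊢
    exact forward hn' τ.1 S hS.1 hS.2
  · intro S' hS'
    simp only [Finset.mem_filter, Finset.mem_univ, true_and] at hS' ⊢
    exact backward hn' τ.1 τ.2 S' hS'.1 hS'.2
  · intro S hS
    simp only [Finset.mem_filter, Finset.mem_univ, true_and] at hS
    apply lift_restrictS
    intro a
    rw [← hS.2, rowSig_big, vs_occ]
  · intro S' _
    exact restrict_liftS τ.1 S'
  · intro S hS
    simp only [Finset.mem_filter, Finset.mem_univ, true_and] at hS
    have hl : ∀ a : Fin m, (a, Fin.last n') ∈ S ↔ τ.1 a = VState.occ := by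
      intro a
      rw [← hS.2, rowSig_big, vs_occ]
    conv_lhs => rw [← lift_restrictS hl]
    rw [card_liftS']
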